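/- Let A, B be finite nonempty sets of integers with min A = min B = 0, max A = M, max B = N, M ≥ N, |A+B| = |A|+|B|-1+r, h_A = |[0,M]\A| ≤ |B| - 2, and r ≤ |B| - 2 - δ(A,B), where δ(A,B) = 1 if A ⊆ B and 0 otherwise. If x ∈ [0,M] \ A satisfies x ∉ A+B and y ∈ [0,M] \ A satisfies y + N ∉ A+B, then x < y. -/
import Mathlib
set_option maxHeartbeats 1000000

open scoped Pointwise
open scoped Classical
open Finset

private lemma stmt8_card_Icc (a b : ℤ) (h : a ≤ b + 1) : ((Finset.Icc a b).card : ℤ) = b + 1 - a := by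
  rw [Int.card_Icc]; omega

private lemma stmt8_card_add_le {S T U : Finset ℤ} (hS : S ⊆ U) (hT : T ⊆ U)
    (h : ∀ z ∈ S, z ∉ T) : S.card + T.card ≤ U.card := by
  have hd : Disjoint S T := Finset.disjoint_left.mpr h
  calc S.card + T.card = (S ∪ T).card := (Finset.card_union_of_disjoint hd).symm
  _ ≤ U.card := Finset.card_le_card (Finset.union_subset hS hT)

private lemma stmt8_filter_count (B : Finset ℤ) (v₂ v₁ : ℤ) (h : v₂ ≤ v₁) :
    (B.filter (fun b => b ≤ v₁)).card + (B.filter (fun b => v₂ ≤ b)).card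
    = B.card + (B.filter (fun b => v₂ ≤ b ∧ b ≤ v₁)).card := by
  have h1 : (B.filter (fun b => b ≤ v₁)) ∪ (B.filter (fun b => v₂ ≤ b)) = B := by
    ext z; simp only [mem_union, mem_filter]; constructor
    · rintro (⟨hz, _⟩ | ⟨hz, _⟩) <;> exact hz
    · intro hz
      by_cases hc : z ≤ v₁
      · exact Or.inl ⟨hz, hc⟩
      · exact Or.inr ⟨hz, by omega⟩
  have h2 : (B.filter (fun b => b ≤ v₁)) ∩ (B.filter (fun b => v₂ ≤ b))
      = B.filter (fun b => v₂ ≤ b ∧ b ≤ v₁) := by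
    ext z; simp only [mem_inter, mem_filter]; tauto
  have h3 := Finset.card_union_add_card_inter (B.filter (fun b => b ≤ v₁)) (B.filter (fun b => v₂ ≤ b))
  rw [h1, h2] at h3
  omega

/-- The two hole families generated by a low sumset hole `v₁` and a high sumset hole `v₂ + M`. -/
private lemma stmt8_XY_count (A B : Finset ℤ) (M N v₁ v₂ : ℤ)
    (hB0 : ∀ b ∈ B, 0 ≤ b) (hBN : ∀ b ∈ B, b ≤ N) (hNM : N ≤ M)
    (hv₁M : v₁ ≤ M) (hv₁C : v₁ ∉ A + B)
    (hv₂0 : 0 ≤ v₂) (hv₂C : v₂ + M ∉ A + B) (hle : v₂ ≤ v₁) :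
    (B.card : ℤ) + ((B.filter (fun b => v₂ ≤ b ∧ b ≤ v₁)).card : ℤ)
      ≤ ((Finset.Icc 0 M \ A).card : ℤ)
        + ((((B.filter (fun b => b ≤ v₁)).image (fun b => v₁ - b)) ∩
           ((B.filter (fun b => v₂ ≤ b)).image (fun b => v₂ + M - b))).card : ℤ) := by
  set X := (B.filter (fun b => b ≤ v₁)).image (fun b => v₁ - b) with hXdef
  set Y := (B.filter (fun b => v₂ ≤ b)).image (fun b => v₂ + M - b) with hYdef
  have hXsub : X ⊆ Finset.Icc 0 M \ A := by
    intro z hz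
    simp only [hXdef, mem_image, mem_filter] at hz
    obtain ⟨b, ⟨hbB, hb1⟩, rfl⟩ := hz
    have hb0 := hB0 b hbB
    simp only [mem_sdiff, mem_Icc]
    refine ⟨⟨by omega, by omega⟩, ?_⟩
    intro hzA
    exact hv₁C (by simpa using Finset.add_mem_add hzA hbB)
  have hYsub : Y ⊆ Finset.Icc 0 M \ A := by
    intro z hz
    simp only [hYdef, mem_image, mem_filter] at hz
    obtain ⟨b, ⟨hbB, hb1⟩, rfl⟩ := hz
    have hbN := hBN b hbB
    simp only [mem_sdiff, mem_Icc]
    refine ⟨⟨by omega, by omega⟩, ?_⟩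
    intro hzA
    exact hv₂C (by simpa using Finset.add_mem_add hzA hbB)
  have hXcard : X.card = (B.filter (fun b => b ≤ v₁)).card :=
    Finset.card_image_of_injective _ (fun a b hab => by omega)
  have hYcard : Y.card = (B.filter (fun b => v₂ ≤ b)).card :=
    Finset.card_image_of_injective _ (fun a b hab => by omega)
  have hcup : (X ∪ Y).card ≤ (Finset.Icc 0 M \ A).card :=
    Finset.card_le_card (Finset.union_subset hXsub hYsub)
  have hci := Finset.card_union_add_card_inter X Y
  have hfc := stmt8_filter_count B v₂ v₁ hle
  have heq : (B.card : ℤ) + ((B.filter (fun b => v₂ ≤ b ∧ b ≤ v₁)).card : ℤ)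
      = (X.card : ℤ) + (Y.card : ℤ) := by
    rw [hXcard, hYcard]; exact_mod_cast (by exact_mod_cast hfc.symm)
  rw [heq]
  have h1 : (X.card : ℤ) + Y.card = ((X ∪ Y).card : ℤ) + ((X ∩ Y).card : ℤ) := by
    exact_mod_cast hci.symm
  have h2 : ((X ∪ Y).card : ℤ) ≤ ((Finset.Icc 0 M \ A).card : ℤ) := by exact_mod_cast hcup
  omega


private lemma stmt8_card_add4_le {S1 S2 S3 S4 U : Finset ℤ}
    (h1 : S1 ⊆ U) (h2 : S2 ⊆ U) (h3 : S3 ⊆ U) (h4 : S4 ⊆ U)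
    (d12 : ∀ z ∈ S1, z ∉ S2) (d13 : ∀ z ∈ S1, z ∉ S3) (d14 : ∀ z ∈ S1, z ∉ S4)
    (d23 : ∀ z ∈ S2, z ∉ S3) (d24 : ∀ z ∈ S2, z ∉ S4) (d34 : ∀ z ∈ S3, z ∉ S4) :
    S1.card + S2.card + S3.card + S4.card ≤ U.card := by
  have e34 : (S3 ∪ S4).card = S3.card + S4.card :=
    Finset.card_union_of_disjoint (Finset.disjoint_left.mpr d34)
  have e234 : (S2 ∪ (S3 ∪ S4)).card = S2.card + (S3 ∪ S4).card := by
    refine Finset.card_union_of_disjoint (Finset.disjoint_left.mpr ?_)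
    intro z hz
    simp only [Finset.mem_union, not_or]
    exact ⟨d23 z hz, d24 z hz⟩
  have e1234 : (S1 ∪ (S2 ∪ (S3 ∪ S4))).card = S1.card + (S2 ∪ (S3 ∪ S4)).card := by
    refine Finset.card_union_of_disjoint (Finset.disjoint_left.mpr ?_)
    intro z hz
    simp only [Finset.mem_union, not_or]
    exact ⟨d12 z hz, d13 z hz, d14 z hz⟩
  have hsub : S1 ∪ (S2 ∪ (S3 ∪ S4)) ⊆ U :=
    Finset.union_subset h1 (Finset.union_subset h2 (Finset.union_subset h3 h4))
  have := Finset.card_le_card hsub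
  omega

theorem stmt8 (A B : Finset ℤ) (hA : A.Nonempty) (hB : B.Nonempty) (M N r : ℤ)
    (hminA : A.min' hA = 0) (hminB : B.min' hB = 0)
    (hmaxA : A.max' hA = M) (hmaxB : B.max' hB = N) (hMN : N ≤ M)
    (hr : ((A + B).card : ℤ) = (A.card : ℤ) + (B.card : ℤ) - 1 + r)
    (hhole : ((Finset.Icc 0 M \ A).card : ℤ) ≤ (B.card : ℤ) - 2)
    (hrb : r ≤ (B.card : ℤ) - 2 - (if A ⊆ B then 1 else 0))
    (x y : ℤ) (hx : x ∈ Finset.Icc 0 M) (hxA : x ∉ A) (hxL : x ∉ A + B)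
    (hy : y ∈ Finset.Icc 0 M) (hyA : y ∉ A) (hyR : y + N ∉ A + B) :
    x < y := by
  by_contra hxy
  push_neg at hxy   -- hxy : y ≤ x
  simp only [mem_Icc] at hx hy
  -- ### basic facts
  have h0A : (0 : ℤ) ∈ A := hminA ▸ A.min'_mem hA
  have hMA : M ∈ A := hmaxA ▸ A.max'_mem hA
  have hA0 : ∀ a ∈ A, 0 ≤ a := fun a ha => hminA ▸ A.min'_le a ha
  have hAM : ∀ a ∈ A, a ≤ M := fun a ha => hmaxA ▸ A.le_max' a ha
  have h0B : (0 : ℤ) ∈ B := hminB ▸ B.min'_mem hB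
  have hNB : N ∈ B := hmaxB ▸ B.max'_mem hB
  have hB0 : ∀ b ∈ B, 0 ≤ b := fun b hb => hminB ▸ B.min'_le b hb
  have hBN : ∀ b ∈ B, b ≤ N := fun b hb => hmaxB ▸ B.le_max' b hb
  have hM0 : (0 : ℤ) ≤ M := hA0 M hMA
  have hN0 : (0 : ℤ) ≤ N := hB0 N hNB
  have hAsub : A ⊆ Finset.Icc 0 M := fun a ha => by
    simp only [mem_Icc]; exact ⟨hA0 a ha, hAM a ha⟩
  have hBsub : B ⊆ Finset.Icc 0 N := fun b hb => by
    simp only [mem_Icc]; exact ⟨hB0 b hb, hBN b hb⟩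
  -- card identities
  have cardA : (A.card : ℤ) = M + 1 - ((Finset.Icc 0 M \ A).card : ℤ) := by
    have h1 : (Finset.Icc 0 M \ A).card = (Finset.Icc 0 M).card - A.card :=
      Finset.card_sdiff_of_subset hAsub
    have h2 : A.card ≤ (Finset.Icc 0 M).card := Finset.card_le_card hAsub
    have h3 : ((Finset.Icc 0 M).card : ℤ) = M + 1 := by rw [Int.card_Icc]; omega
    omega
  have cardB : (B.card : ℤ) = N + 1 - ((Finset.Icc 0 N \ B).card : ℤ) := by
    have h1 : (Finset.Icc 0 N \ B).card = (Finset.Icc 0 N).card - B.card :=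
      Finset.card_sdiff_of_subset hBsub
    have h2 : B.card ≤ (Finset.Icc 0 N).card := Finset.card_le_card hBsub
    have h3 : ((Finset.Icc 0 N).card : ℤ) = N + 1 := by rw [Int.card_Icc]; omega
    omega
  -- ### coverage: everything in (N, M] is in A + B
  have cov : ∀ v : ℤ, N < v → v ≤ M → v ∈ A + B := by
    intro v hv1 hv2
    by_contra hvC
    have hDsub : B.image (fun b => v - b) ⊆ Finset.Icc 0 M := by
      intro z hz
      simp only [mem_image] at hz
      obtain ⟨b, hb, rfl⟩ := hz
      have := hB0 b hb; have := hBN b hb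
      simp only [mem_Icc]; omega
    have hdisj : ∀ z ∈ A, z ∉ B.image (fun b => v - b) := by
      intro z hzA hz
      simp only [mem_image] at hz
      obtain ⟨b, hb, hab⟩ := hz
      apply hvC
      have : z + b ∈ A + B := Finset.add_mem_add hzA hb
      have hzv : z + b = v := by omega
      rwa [hzv] at this
    have hDcard : (B.image (fun b => v - b)).card = B.card :=
      Finset.card_image_of_injective _ (fun a b hab => by omega)
    have hle := stmt8_card_add_le hAsub hDsub hdisj
    rw [hDcard] at hle
    have hle' : (A.card : ℤ) + B.card ≤ ((Finset.Icc 0 M).card : ℤ) := by exact_mod_cast hle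
    have h3 : ((Finset.Icc 0 M).card : ℤ) = M + 1 := by rw [Int.card_Icc]; omega
    omega
  -- ### the two sets of "bad residues"
  set E₁ := (Finset.Icc 0 M).filter (fun v => v ∉ A + B) with hE₁def
  set E₂ := (Finset.Icc 0 N).filter (fun v => v + M ∉ A + B) with hE₂def
  have memE₁ : ∀ v : ℤ, v ∈ E₁ ↔ (0 ≤ v ∧ v ≤ M ∧ v ∉ A + B) := by
    intro v; simp only [hE₁def, mem_filter, mem_Icc]; tauto
  have memE₂ : ∀ v : ℤ, v ∈ E₂ ↔ (0 ≤ v ∧ v ≤ N ∧ v + M ∉ A + B) := by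
    intro v; simp only [hE₂def, mem_filter, mem_Icc]; tauto
  -- E₁ is inside [0, N], misses A and B
  have hE₁N : ∀ v ∈ E₁, v ≤ N := by
    intro v hv
    rw [memE₁] at hv
    by_contra hc
    exact hv.2.2 (cov v (by omega) hv.2.1)
  have hE₁A : ∀ v ∈ E₁, v ∉ A := by
    intro v hv hvA
    rw [memE₁] at hv
    exact hv.2.2 (by simpa using Finset.add_mem_add hvA h0B)
  have hE₁B : ∀ v ∈ E₁, v ∉ B := by
    intro v hv hvB
    rw [memE₁] at hv
    exact hv.2.2 (by simpa using Finset.add_mem_add h0A hvB)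
  have hE₂B : ∀ v ∈ E₂, v ∉ B := by
    intro v hv hvB
    rw [memE₂] at hv
    have : v + M ∈ A + B := by
      have := Finset.add_mem_add hMA hvB
      simpa [add_comm] using this
    exact hv.2.2 this
  -- E₂-element shifted by M - N misses A
  have hE₂A' : ∀ v ∈ E₂, v + (M - N) ∉ A := by
    intro v hv hvA
    rw [memE₂] at hv
    have : v + (M - N) + N ∈ A + B := Finset.add_mem_add hvA hNB
    have h2 : v + (M - N) + N = v + M := by ring
    rw [h2] at this
    exact hv.2.2 this
  -- ### E₁ and E₂ are disjoint
  have hE₁E₂ : ∀ v ∈ E₁, v ∉ E₂ := by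
    intro v hv1 hv2
    have hv1' := (memE₁ v).mp hv1
    have hv2' := (memE₂ v).mp hv2
    have key := stmt8_XY_count A B M N v v hB0 hBN hMN (by omega) hv1'.2.2 hv1'.1 hv2'.2.2 le_rfl
    -- the intersection is contained in {v}
    have hsub : (((B.filter (fun b => b ≤ v)).image (fun b => v - b)) ∩
           ((B.filter (fun b => v ≤ b)).image (fun b => v + M - b))) ⊆ {v} := by
      intro z hz
      simp only [mem_inter, mem_image, mem_filter, mem_singleton] at hz ⊢
      obtain ⟨⟨b, ⟨hbB, hb1⟩, hbe⟩, ⟨b', ⟨hb'B, hb'1⟩, hb'e⟩⟩ := hz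
      have := hBN b' hb'B
      have := hB0 b hbB
      omega
    have hcard1 : (((B.filter (fun b => b ≤ v)).image (fun b => v - b)) ∩
           ((B.filter (fun b => v ≤ b)).image (fun b => v + M - b))).card ≤ 1 := by
      calc _ ≤ ({v} : Finset ℤ).card := Finset.card_le_card hsub
      _ = 1 := Finset.card_singleton v
    have hcard1' : ((((B.filter (fun b => b ≤ v)).image (fun b => v - b)) ∩
           ((B.filter (fun b => v ≤ b)).image (fun b => v + M - b))).card : ℤ) ≤ 1 := by
      exact_mod_cast hcard1
    have hfpos : (0:ℤ) ≤ ((B.filter (fun b => v ≤ b ∧ b ≤ v)).card : ℤ) := by positivity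
    omega
  -- ### near-miss kill lemma
  have nearkill : ∀ e ∈ E₁, ∀ q' ∈ E₂, q' ≤ e → e + N < q' + M → False := by
    intro e he q' hq' hle hlt
    have he' := (memE₁ e).mp he
    have hq'' := (memE₂ q').mp hq'
    have key := stmt8_XY_count A B M N e q' hB0 hBN hMN he'.2.1 he'.2.2 hq''.1 hq''.2.2 hle
    have hempty : (((B.filter (fun b => b ≤ e)).image (fun b => e - b)) ∩
           ((B.filter (fun b => q' ≤ b)).image (fun b => q' + M - b))) = ∅ := by
      rw [Finset.eq_empty_iff_forall_notMem]
      intro z hz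
      simp only [mem_inter, mem_image, mem_filter] at hz
      obtain ⟨⟨b, ⟨hbB, hb1⟩, hbe⟩, ⟨b', ⟨hb'B, hb'1⟩, hb'e⟩⟩ := hz
      have := hBN b' hb'B
      have := hB0 b hbB
      omega
    have hcard0 : (((B.filter (fun b => b ≤ e)).image (fun b => e - b)) ∩
           ((B.filter (fun b => q' ≤ b)).image (fun b => q' + M - b))).card = 0 :=
      Finset.card_eq_zero.mpr hempty
    have hcard0' : ((((B.filter (fun b => b ≤ e)).image (fun b => e - b)) ∩
           ((B.filter (fun b => q' ≤ b)).image (fun b => q' + M - b))).card : ℤ) = 0 := by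
      exact_mod_cast hcard0
    have hfpos : (0:ℤ) ≤ ((B.filter (fun b => q' ≤ b ∧ b ≤ e)).card : ℤ) := by positivity
    omega
  -- ### the wrong-order pair
  have hyM : M ≤ y + N := by
    by_contra hc
    push_neg at hc
    by_cases hy0 : y = 0
    · exact hyR (by rw [hy0]; simpa using Finset.add_mem_add h0A hNB)
    · exact hyR (cov (y + N) (by omega) (by omega))
  have hxE₁ : x ∈ E₁ := (memE₁ x).mpr ⟨hx.1, hx.2, hxL⟩
  have hyE₂ : y - (M - N) ∈ E₂ := by
    rw [memE₂]
    refine ⟨by omega, by omega, ?_⟩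
    have : y - (M - N) + M = y + N := by ring
    rw [this]; exact hyR
  have hE₂ne : E₂.Nonempty := ⟨_, hyE₂⟩
  -- q₀ : the minimum of E₂
  set q₀ := E₂.min' hE₂ne with hq₀def
  have hq₀E₂ : q₀ ∈ E₂ := E₂.min'_mem hE₂ne
  have hq₀min : ∀ v ∈ E₂, q₀ ≤ v := fun v hv => E₂.min'_le v hv
  -- p : minimum of eligible E₁
  have hFne : (E₁.filter (fun e => q₀ + (M - N) ≤ e)).Nonempty := by
    refine ⟨x, ?_⟩
    simp only [mem_filter]
    refine ⟨hxE₁, ?_⟩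
    have := hq₀min _ hyE₂
    omega
  set p := (E₁.filter (fun e => q₀ + (M - N) ≤ e)).min' hFne with hpdef
  have hpF : p ∈ E₁.filter (fun e => q₀ + (M - N) ≤ e) := Finset.min'_mem _ _
  have hpE₁ : p ∈ E₁ := (Finset.mem_filter.mp hpF).1
  have hpq₀ : q₀ + (M - N) ≤ p := (Finset.mem_filter.mp hpF).2
  have hpmin : ∀ e ∈ E₁, q₀ + (M - N) ≤ e → p ≤ e := by
    intro e he h1
    have hemem : e ∈ E₁.filter (fun w => q₀ + (M - N) ≤ w) := Finset.mem_filter.mpr ⟨he, h1⟩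
    rw [hpdef]
    exact Finset.min'_le _ e hemem
  -- q : max of E₂ with q + (M - N) ≤ p
  have hGne : (E₂.filter (fun v => v + (M - N) ≤ p)).Nonempty := by
    exact ⟨q₀, Finset.mem_filter.mpr ⟨hq₀E₂, by omega⟩⟩
  set q := (E₂.filter (fun v => v + (M - N) ≤ p)).max' hGne with hqdef
  have hqG : q ∈ E₂.filter (fun v => v + (M - N) ≤ p) := Finset.max'_mem _ _
  have hqE₂ : q ∈ E₂ := (Finset.mem_filter.mp hqG).1
  have hqp : q + (M - N) ≤ p := (Finset.mem_filter.mp hqG).2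
  have hqmax : ∀ v ∈ E₂, v + (M - N) ≤ p → v ≤ q := by
    intro v hv h1
    have hvmem : v ∈ E₂.filter (fun w => w + (M - N) ≤ p) := Finset.mem_filter.mpr ⟨hv, h1⟩
    rw [hqdef]
    exact Finset.le_max' _ v hvmem
  have hq0 : 0 ≤ q := ((memE₂ q).mp hqE₂).1
  have hqN : q ≤ N := ((memE₂ q).mp hqE₂).2.1
  have hp0 : 0 ≤ p := ((memE₁ p).mp hpE₁).1
  have hpN : p ≤ N := hE₁N p hpE₁
  have hpC : p ∉ A + B := ((memE₁ p).mp hpE₁).2.2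
  have hqC : q + M ∉ A + B := ((memE₂ q).mp hqE₂).2.2
  -- (9) E₁ has no elements strictly between q and p
  have hE₁gap : ∀ e ∈ E₁, q < e → e < p → False := by
    intro e he h1 h2
    by_cases hc : q₀ + (M - N) ≤ e
    · exact absurd (hpmin e he hc) (by omega)
    · -- e < q₀ + (M - N) : near-kill with q₀
      push_neg at hc
      have hq₀q : q₀ ≤ q := hq₀min q hqE₂
      exact nearkill e he q₀ hq₀E₂ (by omega) (by omega)
  -- (10) E₂ has no elements in (q, p]
  have hE₂gap : ∀ v ∈ E₂, q < v → v ≤ p → False := by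
    intro v hv h1 h2
    by_cases hc : v + (M - N) ≤ p
    · exact absurd (hqmax v hv hc) (by omega)
    · push_neg at hc
      exact nearkill p hpE₁ v hv h2 (by omega)
  -- ### V : the middle coholes
  set V := (Finset.Ioo q p).filter (fun z => z ∉ A ∧ z ∉ B) with hVdef
  -- ### main hole count : h + ι ≥ k + w
  have key := stmt8_XY_count A B M N p q hB0 hBN hMN (by omega) hpC hq0 hqC (by omega)
  -- ι-bound: the intersection is inside insert p (filter ∪ (V ∪ ite))
  set Z := (((B.filter (fun b => b ≤ p)).image (fun b => p - b)) ∩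
           ((B.filter (fun b => q ≤ b)).image (fun b => q + M - b))) with hZdef
  have hZsub : Z ⊆ insert p ((B.filter (fun b => q ≤ b ∧ b ≤ p)) ∪
      (V ∪ (if M = N then ({q} : Finset ℤ) else ∅))) := by
    intro z hz
    simp only [hZdef, mem_inter, mem_image, mem_filter] at hz
    obtain ⟨⟨b, ⟨hbB, hb1⟩, hbe⟩, ⟨b', ⟨hb'B, hb'1⟩, hb'e⟩⟩ := hz
    have hb0 := hB0 b hbB
    have hb'N := hBN b' hb'B
    -- z = p - b = q + M - b', so z ≥ q + (M - N) and z ≤ p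
    have hzq : q + (M - N) ≤ z := by omega
    have hzp : z ≤ p := by omega
    have hzA : z ∉ A := by
      intro hzA
      apply hpC
      have : z + b ∈ A + B := Finset.add_mem_add hzA hbB
      have h2 : z + b = p := by omega
      rwa [h2] at this
    simp only [mem_insert, mem_union, mem_filter, mem_Ioo]
    by_cases hzp' : z = p
    · exact Or.inl hzp'
    · right
      by_cases hzB : z ∈ B
      · exact Or.inl ⟨hzB, by omega, by omega⟩
      · right
        by_cases hzq' : z = q
        · -- then b' = M, so M ≤ N, so M = N
          have hb'M : b' = M := by omega
          have hMN' : M = N := by omega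
          rw [if_pos hMN']
          simp only [mem_singleton]
          exact Or.inr hzq'
        · left
          simp only [hVdef, mem_filter, mem_Ioo]
          exact ⟨⟨by omega, by omega⟩, hzA, hzB⟩
  have hZcard : (Z.card : ℤ) ≤ 1 + ((B.filter (fun b => q ≤ b ∧ b ≤ p)).card : ℤ)
      + (V.card : ℤ) + (if M = N then 1 else 0) := by
    have h1 : Z.card ≤ (insert p ((B.filter (fun b => q ≤ b ∧ b ≤ p)) ∪
        (V ∪ (if M = N then ({q} : Finset ℤ) else ∅)))).card := Finset.card_le_card hZsub
    have h2 : (insert p ((B.filter (fun b => q ≤ b ∧ b ≤ p)) ∪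
        (V ∪ (if M = N then ({q} : Finset ℤ) else ∅)))).card
        ≤ 1 + ((B.filter (fun b => q ≤ b ∧ b ≤ p)).card
          + (V.card + (if M = N then ({q} : Finset ℤ) else ∅).card)) := by
      calc _ ≤ ((B.filter (fun b => q ≤ b ∧ b ≤ p)) ∪
          (V ∪ (if M = N then ({q} : Finset ℤ) else ∅))).card + 1 := Finset.card_insert_le _ _
      _ ≤ ((B.filter (fun b => q ≤ b ∧ b ≤ p)).card
          + (V ∪ (if M = N then ({q} : Finset ℤ) else ∅)).card) + 1 := by
            have := Finset.card_union_le (B.filter (fun b => q ≤ b ∧ b ≤ p))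
              (V ∪ (if M = N then ({q} : Finset ℤ) else ∅))
            omega
      _ ≤ _ := by
            have := Finset.card_union_le V (if M = N then ({q} : Finset ℤ) else ∅)
            omega
    have h5 : ((if M = N then ({q} : Finset ℤ) else ∅).card : ℤ) = (if M = N then 1 else 0) := by
      split <;> simp
    omega
  -- ### cohole count
  have hVsub : V ⊆ Finset.Icc 0 N \ B := by
    intro z hz
    simp only [hVdef, mem_filter, mem_Ioo] at hz
    simp only [mem_sdiff, mem_Icc]
    exact ⟨⟨by omega, by omega⟩, hz.2.2⟩
  have hE₁sub : E₁ ⊆ Finset.Icc 0 N \ B := by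
    intro z hz
    have h1 := (memE₁ z).mp hz
    simp only [mem_sdiff, mem_Icc]
    exact ⟨⟨h1.1, hE₁N z hz⟩, hE₁B z hz⟩
  have hE₂Asub : E₂ \ A ⊆ Finset.Icc 0 N \ B := by
    intro z hz
    simp only [mem_sdiff] at hz
    have h1 := (memE₂ z).mp hz.1
    simp only [mem_sdiff, mem_Icc]
    exact ⟨⟨h1.1, h1.2.1⟩, hE₂B z hz.1⟩
  have hAIsub : (A ∩ Finset.Icc 0 N) \ B ⊆ Finset.Icc 0 N \ B := by
    intro z hz
    simp only [mem_sdiff, mem_inter] at hz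
    simp only [mem_sdiff]
    exact ⟨hz.1.2, hz.2⟩
  have hbeta : E₁.card + (E₂ \ A).card + V.card + ((A ∩ Finset.Icc 0 N) \ B).card
      ≤ (Finset.Icc 0 N \ B).card := by
    apply stmt8_card_add4_le hE₁sub hE₂Asub hVsub hAIsub
    · intro z hz hz2
      exact hE₁E₂ z hz (Finset.mem_sdiff.mp hz2).1
    · intro z hz hz2
      have h2 := (Finset.mem_filter.mp hz2).1
      simp only [mem_Ioo] at h2
      exact hE₁gap z hz h2.1 h2.2
    · intro z hz hz2
      exact hE₁A z hz (Finset.mem_inter.mp (Finset.mem_sdiff.mp hz2).1).1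
    · intro z hz hz2
      have h2 := (Finset.mem_filter.mp hz2).1
      simp only [mem_Ioo] at h2
      exact hE₂gap z (Finset.mem_sdiff.mp hz).1 h2.1 (by omega)
    · intro z hz hz2
      exact (Finset.mem_sdiff.mp hz).2 (Finset.mem_inter.mp (Finset.mem_sdiff.mp hz2).1).1
    · intro z hz hz2
      exact (Finset.mem_filter.mp hz).2.1 (Finset.mem_inter.mp (Finset.mem_sdiff.mp hz2).1).1
  have hsplit : (E₂ \ A).card + (E₂ ∩ A).card = E₂.card := by
    have := Finset.card_filter_add_card_filter_not (s := E₂) (p := fun z => z ∈ A)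
    have e1 : E₂.filter (fun z => z ∈ A) = E₂ ∩ A := by
      ext z; simp [mem_filter, mem_inter]
    have e2 : E₂.filter (fun z => z ∉ A) = E₂ \ A := by
      ext z; simp [mem_filter, mem_sdiff]
    rw [e1, e2] at this
    omega
  have hE₂AAI : E₂ ∩ A ⊆ (A ∩ Finset.Icc 0 N) \ B := by
    intro z hz
    simp only [mem_inter] at hz
    have h1 := (memE₂ z).mp hz.1
    simp only [mem_sdiff, mem_inter, mem_Icc]
    exact ⟨⟨hz.2, h1.1, h1.2.1⟩, hE₂B z hz.1⟩
  have hE₂AAIcard : (E₂ ∩ A).card ≤ ((A ∩ Finset.Icc 0 N) \ B).card :=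
    Finset.card_le_card hE₂AAI
  -- ### sumset cardinality bound
  have hsumbound : M + N + 1 ≤ ((A + B).card : ℤ) + (E₁.card : ℤ) + (E₂.card : ℤ) := by
    have hsub : Finset.Icc 0 (M + N) ⊆ (A + B) ∪ (E₁ ∪ E₂.image (fun v => v + M)) := by
      intro c hc
      simp only [mem_Icc] at hc
      by_cases hcC : c ∈ A + B
      · exact Finset.mem_union.mpr (Or.inl hcC)
      · refine Finset.mem_union.mpr (Or.inr (Finset.mem_union.mpr ?_))
        by_cases hcM : c ≤ M
        · exact Or.inl ((memE₁ c).mpr ⟨hc.1, hcM, hcC⟩)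
        · refine Or.inr ?_
          simp only [mem_image]
          refine ⟨c - M, (memE₂ (c - M)).mpr ⟨by omega, by omega, ?_⟩, by ring⟩
          have : c - M + M = c := by ring
          rw [this]; exact hcC
    have h1 : (Finset.Icc 0 (M + N)).card ≤ ((A + B) ∪ (E₁ ∪ E₂.image (fun v => v + M))).card :=
      Finset.card_le_card hsub
    have h2 : ((A + B) ∪ (E₁ ∪ E₂.image (fun v => v + M))).card
        ≤ (A + B).card + (E₁.card + (E₂.image (fun v => v + M)).card) := by
      have a1 := Finset.card_union_le (A + B) (E₁ ∪ E₂.image (fun v => v + M))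
      have a2 := Finset.card_union_le E₁ (E₂.image (fun v => v + M))
      omega
    have h3 : (E₂.image (fun v => v + M)).card ≤ E₂.card := Finset.card_image_le
    have h4 : ((Finset.Icc 0 (M + N)).card : ℤ) = M + N + 1 := by
      rw [Int.card_Icc]; omega
    omega
  -- ### final assembly
  have hrlow : r ≥ ((Finset.Icc 0 M \ A).card : ℤ) + ((Finset.Icc 0 N \ B).card : ℤ)
      - (E₁.card : ℤ) - (E₂.card : ℤ) := by
    omega
  by_cases hMeq : M = N
  · -- M = N
    have hE₂A0 : E₂ ∩ A = ∅ := by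
      rw [Finset.eq_empty_iff_forall_notMem]
      intro z hz
      simp only [mem_inter] at hz
      have h1 := (memE₂ z).mp hz.1
      apply h1.2.2
      have : z + N ∈ A + B := Finset.add_mem_add hz.2 hNB
      rwa [hMeq]
    simp only [if_pos hMeq] at hZcard
    by_cases hAB : A ⊆ B
    · rw [if_pos hAB] at hrb
      have hz0 : (E₂ ∩ A).card = 0 := by rw [hE₂A0]; exact Finset.card_empty
      omega
    · rw [if_neg hAB] at hrb
      have hz0 : (E₂ ∩ A).card = 0 := by rw [hE₂A0]; exact Finset.card_empty
      -- bonus element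
      obtain ⟨a, haA, haB⟩ := Finset.not_subset.mp hAB
      have hbonus : 0 < ((A ∩ Finset.Icc 0 N) \ B).card := by
        refine Finset.card_pos.mpr ⟨a, ?_⟩
        simp only [mem_sdiff, mem_inter, mem_Icc]
        exact ⟨⟨haA, hA0 a haA, by rw [← hMeq]; exact hAM a haA⟩, haB⟩
      omega
  · -- N < M, so A ⊄ B
    have hAB : ¬ A ⊆ B := by
      intro hc
      exact absurd (hBN M (hc hMA)) (by omega)
    rw [if_neg hAB] at hrb
    simp only [if_neg hMeq] at hZcard
    omega
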